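/- Let p be a prime, let G be a pro-p group, and let α₁, α₂, α₃ : G → ℤ/p be continuous homomorphisms. Then the following are equivalent: (1) there exists a continuous homomorphism ρ̄ : G → U₄/Z(U₄) such that π̄_i ∘ ρ̄ = α_i for i = 1, 2, 3, where π̄_i : U₄/Z(U₄) → ℤ/p is the homomorphism induced by the (i,i+1)-entry map on U₄; (2) there exist continuous homomorphisms τ, τ' : G → U₃ such that, for all g ∈ G, τ(g) and A^{α₁(g)}·B^{α₂(g)} have the same image in U₃/⟨C⟩, and τ'(g) and A^{α₂(g)}·B^{α₃(g)} have the same image in U₃/⟨C⟩. -/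

import Mathlib

open Matrix

/-- `n × n` matrices over `ℤ/p`. -/
abbrev MatZ (p n : ℕ) := Matrix (Fin n) (Fin n) (ZMod p)

/-- The set of upper unitriangular invertible `n × n` matrices over `ℤ/p`. -/
def UTcarrier (p n : ℕ) : Set (MatZ p n)ˣ :=
  {M | (∀ i j : Fin n, j < i → (M : MatZ p n) i j = 0) ∧ ∀ i : Fin n, (M : MatZ p n) i i = 1}

theorem one_mem_UTcarrier (p n : ℕ) : (1 : (MatZ p n)ˣ) ∈ UTcarrier p n := by
  constructor
  · intro i j h
    rw [Units.val_one, Matrix.one_apply_ne h.ne']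
  · intro i
    rw [Units.val_one, Matrix.one_apply_eq]

theorem mul_mem_UTcarrier {p n : ℕ} {a b : (MatZ p n)ˣ} (ha : a ∈ UTcarrier p n)
    (hb : b ∈ UTcarrier p n) : a * b ∈ UTcarrier p n := by
  constructor
  · intro i j hij
    have : ((a * b : (MatZ p n)ˣ) : MatZ p n) i j = ∑ k, (a : MatZ p n) i k * (b : MatZ p n) k j := by
      rw [Units.val_mul, Matrix.mul_apply]
    rw [this]
    apply Finset.sum_eq_zero
    intro k _
    rcases lt_or_ge k i with hk | hk
    · rw [ha.1 i k hk, zero_mul]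
    · rw [hb.1 k j (lt_of_lt_of_le hij hk), mul_zero]
  · intro i
    have : ((a * b : (MatZ p n)ˣ) : MatZ p n) i i = ∑ k, (a : MatZ p n) i k * (b : MatZ p n) k i := by
      rw [Units.val_mul, Matrix.mul_apply]
    rw [this]
    rw [Finset.sum_eq_single i]
    · rw [ha.2 i, hb.2 i, one_mul]
    · intro k _ hk
      rcases lt_or_gt_of_ne hk with h | h
      · rw [ha.1 i k h, zero_mul]
      · rw [hb.1 k i h, mul_zero]
    · intro h; exact absurd (Finset.mem_univ i) h

/-- The group `U_n` of upper unitriangular `n × n` matrices over `ℤ/p`, as a subgroup of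
the units of the matrix ring. -/
def UT (p n : ℕ) [Fact p.Prime] : Subgroup (MatZ p n)ˣ where
  carrier := UTcarrier p n
  one_mem' := one_mem_UTcarrier p n
  mul_mem' := fun ha hb => mul_mem_UTcarrier ha hb
  inv_mem' := by
    intro a ha
    haveI : NeZero p := ⟨(Fact.out : p.Prime).ne_zero⟩
    have hpow : ∀ m : ℕ, a ^ m ∈ UTcarrier p n := by
      intro m
      induction m with
      | zero => simpa using one_mem_UTcarrier p n
      | succ k ih => rw [pow_succ]; exact mul_mem_UTcarrier ih ha
    have hpos : 0 < orderOf a := orderOf_pos a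
    have hinv : a⁻¹ = a ^ (orderOf a - 1) := by
      apply inv_eq_of_mul_eq_one_right
      rw [← pow_succ']
      rw [Nat.sub_add_cancel hpos]  -- note: pow_succ' : a ^ (n + 1) = a * a ^ n
      exact pow_orderOf_eq_one a
    rw [hinv]
    exact hpow _

variable (p : ℕ) [Fact p.Prime]

/-- Elementary unitriangular matrix `I + c·Eᵢⱼ` in `U₃`. -/
def elemUT3 (i j : Fin 3) (hij : i ≠ j) (hle : i < j) (c : ZMod p) : ↥(UT p 3) := by
  refine ⟨⟨1 + Matrix.single i j c, 1 - Matrix.single i j c, ?_, ?_⟩, ?_, ?_⟩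
  · have h : Matrix.single i j c * Matrix.single i j c = (0 : MatZ p 3) :=
      Matrix.single_mul_single_of_ne c i j i hij.symm c
    have e : (1 + Matrix.single i j c) * (1 - Matrix.single i j c)
        = 1 - Matrix.single i j c * Matrix.single i j c := by noncomm_ring
    rw [e, h, sub_zero]
  · have h : Matrix.single i j c * Matrix.single i j c = (0 : MatZ p 3) :=
      Matrix.single_mul_single_of_ne c i j i hij.symm c
    have e : (1 - Matrix.single i j c) * (1 + Matrix.single i j c)
        = 1 - Matrix.single i j c * Matrix.single i j c := by noncomm_ring
    rw [e, h, sub_zero]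
  · intro a b hab
    have hba : a ≠ b := hab.ne'
    simp only [Matrix.add_apply, Matrix.one_apply_ne hba, Matrix.single, Matrix.of_apply]
    rw [if_neg]
    · ring
    · rintro ⟨rfl, rfl⟩
      exact absurd hle (not_lt.mpr hab.le)
  · intro a
    simp only [Matrix.add_apply, Matrix.one_apply_eq, Matrix.single, Matrix.of_apply]
    rw [if_neg]
    · ring
    · rintro ⟨rfl, rfl⟩
      exact hij rfl

/-- `A = I + E₁₂ ∈ U₃`. -/
def AU : ↥(UT p 3) := elemUT3 p 0 1 (by decide) (by decide) 1

/-- `B = I + E₂₃ ∈ U₃`. -/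
def BU : ↥(UT p 3) := elemUT3 p 1 2 (by decide) (by decide) 1

/-- `C = I + E₁₃ ∈ U₃`. -/
def CU : ↥(UT p 3) := elemUT3 p 0 2 (by decide) (by decide) 1

/-- The `(i, j)` entry of an element of `U₄`. -/
def entryUT4 (M : ↥(UT p 4)) (i j : Fin 4) : ZMod p := ((M : (MatZ p 4)ˣ) : MatZ p 4) i j

/-- Continuity with respect to the discrete topology on the target (the natural topology
on a finite group). -/
def ContinuousToDiscrete {G : Type*} [TopologicalSpace G] {H : Type*} (f : G → H) : Prop :=
  @Continuous G H _ ⊥ f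

/-- A pro-`p` group. -/
def IsProPGroup (p : ℕ) (G : Type*) [Group G] [TopologicalSpace G] [IsTopologicalGroup G] : Prop :=
  CompactSpace G ∧ T2Space G ∧ TotallyDisconnectedSpace G ∧
    ∀ N : Subgroup G, N.Normal → IsOpen (N : Set G) → ∃ k : ℕ, N.index = p ^ k

def mk3 (a b c : ZMod p) : ↥(UT p 3) := by
  refine ⟨⟨!![1,a,c;0,1,b;0,0,1], !![1,-a,a*b-c;0,1,-b;0,0,1], ?_, ?_⟩, ?_, ?_⟩
  · ext i j
    fin_cases i <;> fin_cases j <;>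
      simp [Matrix.mul_apply, Fin.sum_univ_succ, Matrix.one_apply] <;> ring
  · ext i j
    fin_cases i <;> fin_cases j <;>
      simp [Matrix.mul_apply, Fin.sum_univ_succ, Matrix.one_apply] <;> ring
  · intro i j h
    fin_cases i <;> fin_cases j <;> simp_all [Matrix.vecHead, Matrix.vecTail]
  · intro i
    fin_cases i <;> simp

def ent3 (M : ↥(UT p 3)) (i j : Fin 3) : ZMod p := ((M : (MatZ p 3)ˣ) : MatZ p 3) i j

lemma ent3_mk3 (a b c : ZMod p) :
    ent3 p (mk3 p a b c) 0 1 = a ∧ ent3 p (mk3 p a b c) 1 2 = b ∧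
      ent3 p (mk3 p a b c) 0 2 = c := by
  refine ⟨?_, ?_, ?_⟩ <;> simp [ent3, mk3]

lemma mk3_mul (a b c a' b' c' : ZMod p) :
    mk3 p a b c * mk3 p a' b' c' = mk3 p (a+a') (b+b') (c+c'+a*b') := by
  apply Subtype.ext; apply Units.ext
  show (!![1,a,c;0,1,b;0,0,1] * !![1,a',c';0,1,b';0,0,1] : MatZ p 3) = _
  ext i j
  fin_cases i <;> fin_cases j <;>
    simp [mk3, Matrix.mul_apply, Fin.sum_univ_succ, Matrix.vecHead, Matrix.vecTail] <;> ring

lemma eta3 (M : ↥(UT p 3)) : M = mk3 p (ent3 p M 0 1) (ent3 p M 1 2) (ent3 p M 0 2) := by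
  apply Subtype.ext; apply Units.ext
  ext i j
  fin_cases i <;> fin_cases j <;>
    first
      | rfl
      | exact (M.2.2 _)
      | exact (M.2.1 _ _ (by decide))
      | simp [mk3, ent3]

lemma mk3_one : mk3 p 0 0 0 = 1 := by
  apply Subtype.ext; apply Units.ext
  ext i j
  fin_cases i <;> fin_cases j <;>
    simp [mk3, Matrix.one_apply, Matrix.vecHead, Matrix.vecTail]

lemma mk3_inv (a b c : ZMod p) : (mk3 p a b c)⁻¹ = mk3 p (-a) (-b) (a*b-c) := by
  apply inv_eq_of_mul_eq_one_right
  rw [mk3_mul]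
  rw [show a + -a = 0 by ring, show b + -b = 0 by ring,
    show c + (a*b-c) + a * -b = 0 by ring, mk3_one]

lemma AU_eq : AU p = mk3 p 1 0 0 := by
  apply Subtype.ext; apply Units.ext
  ext i j
  fin_cases i <;> fin_cases j <;>
    simp [mk3, AU, elemUT3, Matrix.single, Matrix.vecHead, Matrix.vecTail]

lemma BU_eq : BU p = mk3 p 0 1 0 := by
  apply Subtype.ext; apply Units.ext
  ext i j
  fin_cases i <;> fin_cases j <;>
    simp [mk3, BU, elemUT3, Matrix.single, Matrix.vecHead, Matrix.vecTail]

lemma CU_eq : CU p = mk3 p 0 0 1 := by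
  apply Subtype.ext; apply Units.ext
  ext i j
  fin_cases i <;> fin_cases j <;>
    simp [mk3, CU, elemUT3, Matrix.single, Matrix.vecHead, Matrix.vecTail]

lemma AU_pow (n : ℕ) : AU p ^ n = mk3 p (n : ZMod p) 0 0 := by
  induction n with
  | zero => simpa using (mk3_one p).symm
  | succ k ih => rw [pow_succ, ih, AU_eq, mk3_mul]; push_cast; ring_nf

lemma BU_pow (n : ℕ) : BU p ^ n = mk3 p 0 (n : ZMod p) 0 := by
  induction n with
  | zero => simpa using (mk3_one p).symm
  | succ k ih => rw [pow_succ, ih, BU_eq, mk3_mul]; push_cast; ring_nf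

lemma CU_pow (n : ℕ) : CU p ^ n = mk3 p 0 0 (n : ZMod p) := by
  induction n with
  | zero => simpa using (mk3_one p).symm
  | succ k ih => rw [pow_succ, ih, CU_eq, mk3_mul]; push_cast; ring_nf

lemma CU_zpow (k : ℤ) : CU p ^ k = mk3 p 0 0 (k : ZMod p) := by
  cases k with
  | ofNat n => rw [Int.ofNat_eq_coe, zpow_natCast, CU_pow]; norm_num
  | negSucc n =>
      rw [zpow_negSucc, CU_pow, mk3_inv]
      push_cast [Int.negSucc_eq]
      norm_num

lemma mem_zpowers_CU (z : ↥(UT p 3)) :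
    z ∈ Subgroup.zpowers (CU p) ↔ ∃ c : ZMod p, z = mk3 p 0 0 c := by
  constructor
  · rintro ⟨k, rfl⟩
    exact ⟨(k : ZMod p), by rw [← CU_zpow]⟩
  · rintro ⟨c, rfl⟩
    haveI : NeZero p := ⟨(Fact.out : p.Prime).ne_zero⟩
    refine ⟨(c.val : ℤ), ?_⟩
    show CU p ^ ((c.val : ℕ) : ℤ) = mk3 p 0 0 c
    rw [zpow_natCast, CU_pow, ZMod.natCast_val, ZMod.cast_id]

theorem one_fin_four' {α : Type*} [Zero α] [One α] :
    (1 : Matrix (Fin 4) (Fin 4) α) = !![1,0,0,0;0,1,0,0;0,0,1,0;0,0,0,1] := by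
  ext i j
  fin_cases i <;> fin_cases j <;> simp [Matrix.one_apply] <;> rfl

theorem mul_fin_four' {α : Type*} [CommRing α]
    (a00 a01 a02 a03 a10 a11 a12 a13 a20 a21 a22 a23 a30 a31 a32 a33
     b00 b01 b02 b03 b10 b11 b12 b13 b20 b21 b22 b23 b30 b31 b32 b33 : α) :
    !![a00,a01,a02,a03;a10,a11,a12,a13;a20,a21,a22,a23;a30,a31,a32,a33] *
      !![b00,b01,b02,b03;b10,b11,b12,b13;b20,b21,b22,b23;b30,b31,b32,b33] =
    !![a00*b00+a01*b10+a02*b20+a03*b30, a00*b01+a01*b11+a02*b21+a03*b31,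
         a00*b02+a01*b12+a02*b22+a03*b32, a00*b03+a01*b13+a02*b23+a03*b33;
       a10*b00+a11*b10+a12*b20+a13*b30, a10*b01+a11*b11+a12*b21+a13*b31,
         a10*b02+a11*b12+a12*b22+a13*b32, a10*b03+a11*b13+a12*b23+a13*b33;
       a20*b00+a21*b10+a22*b20+a23*b30, a20*b01+a21*b11+a22*b21+a23*b31,
         a20*b02+a21*b12+a22*b22+a23*b32, a20*b03+a21*b13+a22*b23+a23*b33;
       a30*b00+a31*b10+a32*b20+a33*b30, a30*b01+a31*b11+a32*b21+a33*b31,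
         a30*b02+a31*b12+a32*b22+a33*b32, a30*b03+a31*b13+a32*b23+a33*b33] := by
  ext i j
  fin_cases i <;> fin_cases j <;> simp [Matrix.mul_apply, Fin.sum_univ_four]

theorem mat4_congr {α : Type*}
    {a00 a01 a02 a03 a10 a11 a12 a13 a20 a21 a22 a23 a30 a31 a32 a33
     b00 b01 b02 b03 b10 b11 b12 b13 b20 b21 b22 b23 b30 b31 b32 b33 : α}
    (h00 : a00 = b00) (h01 : a01 = b01) (h02 : a02 = b02) (h03 : a03 = b03)
    (h10 : a10 = b10) (h11 : a11 = b11) (h12 : a12 = b12) (h13 : a13 = b13)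
    (h20 : a20 = b20) (h21 : a21 = b21) (h22 : a22 = b22) (h23 : a23 = b23)
    (h30 : a30 = b30) (h31 : a31 = b31) (h32 : a32 = b32) (h33 : a33 = b33) :
    !![a00,a01,a02,a03;a10,a11,a12,a13;a20,a21,a22,a23;a30,a31,a32,a33] =
      !![b00,b01,b02,b03;b10,b11,b12,b13;b20,b21,b22,b23;b30,b31,b32,b33] := by
  subst_vars; rfl

def mk4 (a b c d e f : ZMod p) : ↥(UT p 4) := by
  refine ⟨⟨!![1,a,d,f;0,1,b,e;0,0,1,c;0,0,0,1],
    !![1,-a,a*b-d,a*e+c*d-a*b*c-f;0,1,-b,b*c-e;0,0,1,-c;0,0,0,1], ?_, ?_⟩, ?_, ?_⟩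
  · rw [mul_fin_four', one_fin_four']
    apply mat4_congr <;> ring
  · rw [mul_fin_four', one_fin_four']
    apply mat4_congr <;> ring
  · intro i j h
    fin_cases i <;> fin_cases j <;> first
      | exact absurd h (by decide)
      | rfl
  · intro i
    fin_cases i <;> rfl

lemma ent_mk4 (a b c d e f : ZMod p) :
    entryUT4 p (mk4 p a b c d e f) 0 1 = a ∧ entryUT4 p (mk4 p a b c d e f) 1 2 = b ∧
    entryUT4 p (mk4 p a b c d e f) 2 3 = c ∧ entryUT4 p (mk4 p a b c d e f) 0 2 = d ∧
    entryUT4 p (mk4 p a b c d e f) 1 3 = e ∧ entryUT4 p (mk4 p a b c d e f) 0 3 = f :=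
  ⟨rfl, rfl, rfl, rfl, rfl, rfl⟩

lemma mk4_mul (a b c d e f a' b' c' d' e' f' : ZMod p) :
    mk4 p a b c d e f * mk4 p a' b' c' d' e' f' =
      mk4 p (a+a') (b+b') (c+c') (d+d'+a*b') (e+e'+b*c') (f+f'+a*e'+d*c') := by
  apply Subtype.ext; apply Units.ext
  show (!![1,a,d,f;0,1,b,e;0,0,1,c;0,0,0,1] *
      !![1,a',d',f';0,1,b',e';0,0,1,c';0,0,0,1] : MatZ p 4) = _
  rw [mul_fin_four']
  show _ = !![1,a+a',d+d'+a*b',f+f'+a*e'+d*c';0,1,b+b',e+e'+b*c';0,0,1,c+c';0,0,0,1]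
  apply mat4_congr <;> ring

lemma mk4_one : mk4 p 0 0 0 0 0 0 = 1 := by
  apply Subtype.ext; apply Units.ext
  show !![1,0,0,0;0,1,0,0;0,0,1,0;0,0,0,1] = (1 : MatZ p 4)
  rw [one_fin_four']

lemma eta4 (M : ↥(UT p 4)) : M = mk4 p (entryUT4 p M 0 1) (entryUT4 p M 1 2)
    (entryUT4 p M 2 3) (entryUT4 p M 0 2) (entryUT4 p M 1 3) (entryUT4 p M 0 3) := by
  apply Subtype.ext; apply Units.ext
  ext i j
  fin_cases i <;> fin_cases j <;>
    first
      | exact M.2.2 _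
      | exact M.2.1 _ _ (by decide)
      | rfl

lemma ent3a (a b c : ZMod p) : ent3 p (mk3 p a b c) 0 1 = a := rfl
lemma ent3b (a b c : ZMod p) : ent3 p (mk3 p a b c) 1 2 = b := rfl
lemma ent3c (a b c : ZMod p) : ent3 p (mk3 p a b c) 0 2 = c := rfl

lemma ent4a (a b c d e f : ZMod p) : entryUT4 p (mk4 p a b c d e f) 0 1 = a := rfl
lemma ent4b (a b c d e f : ZMod p) : entryUT4 p (mk4 p a b c d e f) 1 2 = b := rfl
lemma ent4c (a b c d e f : ZMod p) : entryUT4 p (mk4 p a b c d e f) 2 3 = c := rfl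
lemma ent4d (a b c d e f : ZMod p) : entryUT4 p (mk4 p a b c d e f) 0 2 = d := rfl
lemma ent4e (a b c d e f : ZMod p) : entryUT4 p (mk4 p a b c d e f) 1 3 = e := rfl
lemma ent4f (a b c d e f : ZMod p) : entryUT4 p (mk4 p a b c d e f) 0 3 = f := rfl

lemma mk3_inj {a b c a' b' c' : ZMod p} (h : mk3 p a b c = mk3 p a' b' c') :
    a = a' ∧ b = b' ∧ c = c' :=
  ⟨by rw [← ent3a p a b c, h, ent3a], by rw [← ent3b p a b c, h, ent3b],
   by rw [← ent3c p a b c, h, ent3c]⟩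

lemma mk4_inj {a b c d e f a' b' c' d' e' f' : ZMod p}
    (h : mk4 p a b c d e f = mk4 p a' b' c' d' e' f') :
    a = a' ∧ b = b' ∧ c = c' ∧ d = d' ∧ e = e' ∧ f = f' :=
  ⟨by rw [← ent4a p a b c d e f, h, ent4a], by rw [← ent4b p a b c d e f, h, ent4b],
   by rw [← ent4c p a b c d e f, h, ent4c], by rw [← ent4d p a b c d e f, h, ent4d],
   by rw [← ent4e p a b c d e f, h, ent4e], by rw [← ent4f p a b c d e f, h, ent4f]⟩

lemma mem_center4 (z : ↥(UT p 4)) :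
    z ∈ Subgroup.center ↥(UT p 4) ↔ ∃ f : ZMod p, z = mk4 p 0 0 0 0 0 f := by
  constructor
  · intro hz
    have hz' := Subgroup.mem_center_iff.mp hz
    obtain ⟨a, b, c, d, e, f, rfl⟩ :
        ∃ a b c d e f : ZMod p, z = mk4 p a b c d e f :=
      ⟨_, _, _, _, _, _, eta4 p z⟩
    have h1 := hz' (mk4 p 1 0 0 0 0 0)
    have h2 := hz' (mk4 p 0 1 0 0 0 0)
    have h3 := hz' (mk4 p 0 0 1 0 0 0)
    rw [mk4_mul, mk4_mul] at h1 h2 h3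
    obtain ⟨-, -, -, e1d, -, e1f⟩ := mk4_inj p h1
    obtain ⟨-, -, -, e2d, e2e, -⟩ := mk4_inj p h2
    obtain ⟨-, -, -, -, -, e3f⟩ := mk4_inj p h3
    have hb : b = 0 := by linear_combination e1d
    have he : e = 0 := by linear_combination e1f
    have ha : a = 0 := by linear_combination -e2d
    have hc : c = 0 := by linear_combination e2e
    have hd : d = 0 := by linear_combination -e3f
    exact ⟨f, by rw [ha, hb, hc, hd, he]⟩
  · rintro ⟨f, rfl⟩
    rw [Subgroup.mem_center_iff]
    intro g
    rw [eta4 p g, mk4_mul, mk4_mul]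
    congr 1 <;> ring

/-- Top-left `3×3` block as a homomorphism `U₄ →* U₃`. -/
def q34 : ↥(UT p 4) →* ↥(UT p 3) where
  toFun M := mk3 p (entryUT4 p M 0 1) (entryUT4 p M 1 2) (entryUT4 p M 0 2)
  map_one' := by
    rw [show (1 : ↥(UT p 4)) = mk4 p 0 0 0 0 0 0 from (mk4_one p).symm]
    simp only [ent4a, ent4b, ent4d]
    exact mk3_one p
  map_mul' := by
    intro M N
    rw [eta4 p M, eta4 p N, mk4_mul]
    simp only [ent4a, ent4b, ent4c, ent4d, ent4e, ent4f]
    rw [mk3_mul]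

/-- Bottom-right `3×3` block as a homomorphism `U₄ →* U₃`. -/
def q34' : ↥(UT p 4) →* ↥(UT p 3) where
  toFun M := mk3 p (entryUT4 p M 1 2) (entryUT4 p M 2 3) (entryUT4 p M 1 3)
  map_one' := by
    rw [show (1 : ↥(UT p 4)) = mk4 p 0 0 0 0 0 0 from (mk4_one p).symm]
    simp only [ent4b, ent4c, ent4e]
    exact mk3_one p
  map_mul' := by
    intro M N
    rw [eta4 p M, eta4 p N, mk4_mul]
    simp only [ent4a, ent4b, ent4c, ent4d, ent4e, ent4f]
    rw [mk3_mul]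

lemma isOpen_bot' {H : Type*} (s : Set H) : @IsOpen H ⊥ s := by
  letI : TopologicalSpace H := ⊥
  haveI : DiscreteTopology H := ⟨rfl⟩
  exact isOpen_discrete s

lemma ctd_comp {G H K : Type*} [TopologicalSpace G] (f : H → K) {ρ : G → H}
    (h : ContinuousToDiscrete ρ) : ContinuousToDiscrete (f ∘ ρ) := by
  letI : TopologicalSpace H := ⊥
  letI : TopologicalSpace K := ⊥
  exact Continuous.comp (continuous_bot (f := f)) h

lemma ctd_comp2 {G H K L : Type*} [TopologicalSpace G] (u : H → K → L) {f : G → H} {k : G → K}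
    (hf : ContinuousToDiscrete f) (hk : ContinuousToDiscrete k) :
    ContinuousToDiscrete (fun g => u (f g) (k g)) := by
  letI : TopologicalSpace H := ⊥
  letI : TopologicalSpace K := ⊥
  letI : TopologicalSpace L := ⊥
  refine continuous_def.mpr fun s _ => ?_
  have heq : (fun g => u (f g) (k g)) ⁻¹' s =
      ⋃ (a : H) (b : K) (_ : u a b ∈ s), f ⁻¹' {a} ∩ k ⁻¹' {b} := by
    ext g
    simp only [Set.mem_preimage, Set.mem_iUnion, Set.mem_inter_iff, Set.mem_singleton_iff]
    constructor
    · intro hg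
      exact ⟨f g, k g, hg, rfl, rfl⟩
    · rintro ⟨a, b, hs, ha, hb⟩
      rw [ha, hb]
      exact hs
  rw [heq]
  exact isOpen_iUnion fun a => isOpen_iUnion fun b => isOpen_iUnion fun _ =>
    (hf.isOpen_preimage _ (isOpen_bot' _)).inter (hk.isOpen_preimage _ (isOpen_bot' _))

lemma q34_apply (M : ↥(UT p 4)) :
    q34 p M = mk3 p (entryUT4 p M 0 1) (entryUT4 p M 1 2) (entryUT4 p M 0 2) := rfl

lemma q34'_apply (M : ↥(UT p 4)) :
    q34' p M = mk3 p (entryUT4 p M 1 2) (entryUT4 p M 2 3) (entryUT4 p M 1 3) := rfl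

lemma mk3_mem_zpowers_CU {x y : ZMod p} (z : ZMod p) (hx : x = 0) (hy : y = 0) :
    mk3 p x y z ∈ Subgroup.zpowers (CU p) := by
  subst hx hy
  exact (mem_zpowers_CU p _).mpr ⟨z, rfl⟩

lemma mk_mk4_f (a b c d e f f' : ZMod p) :
    (QuotientGroup.mk (mk4 p a b c d e f) :
        ↥(UT p 4) ⧸ Subgroup.center ↥(UT p 4)) = QuotientGroup.mk (mk4 p a b c d e f') := by
  have h : mk4 p a b c d e f' = mk4 p a b c d e f * mk4 p 0 0 0 0 0 (f' - f) := by
    rw [mk4_mul]; congr 1 <;> ring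
  rw [h, QuotientGroup.mk_mul,
    (QuotientGroup.eq_one_iff _).mpr ((mem_center4 p _).mpr ⟨f' - f, rfl⟩), mul_one]

/-- For a pro-`p` group `G` and continuous homomorphisms
`α₁, α₂, α₃ : G → ℤ/p`, there is a continuous homomorphism `ρ̄ : G → U₄/Z(U₄)` whose
`(i, i+1)`-entries are the `αᵢ` if and only if there are continuous homomorphisms
`τ, τ' : G → U₃` with `τ(g) ≡ A^{α₁(g)} B^{α₂(g)}` and `τ'(g) ≡ A^{α₂(g)} B^{α₃(g)}`
modulo `⟨C⟩`. -/
theorem exists_hom_U4_mod_center_iff (G : Type*) [Group G] [TopologicalSpace G]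
    [IsTopologicalGroup G] (hG : IsProPGroup p G)
    (α₁ α₂ α₃ : G → ZMod p)
    (hα₁ : ∀ g h : G, α₁ (g * h) = α₁ g + α₁ h)
    (hα₂ : ∀ g h : G, α₂ (g * h) = α₂ g + α₂ h)
    (hα₃ : ∀ g h : G, α₃ (g * h) = α₃ g + α₃ h)
    (hc₁ : ContinuousToDiscrete α₁) (hc₂ : ContinuousToDiscrete α₂)
    (hc₃ : ContinuousToDiscrete α₃) :
    (∃ ρ : G →* (↥(UT p 4) ⧸ Subgroup.center ↥(UT p 4)),
        ContinuousToDiscrete ρ ∧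
        ∀ (g : G) (M : ↥(UT p 4)), (QuotientGroup.mk M : ↥(UT p 4) ⧸ Subgroup.center ↥(UT p 4)) = ρ g →
          entryUT4 p M 0 1 = α₁ g ∧ entryUT4 p M 1 2 = α₂ g ∧ entryUT4 p M 2 3 = α₃ g) ↔
      (∃ τ τ' : G →* ↥(UT p 3),
        ContinuousToDiscrete τ ∧ ContinuousToDiscrete τ' ∧
        ∀ g : G,
          (AU p ^ (α₁ g).val * BU p ^ (α₂ g).val)⁻¹ * τ g ∈ Subgroup.zpowers (CU p) ∧
          (AU p ^ (α₂ g).val * BU p ^ (α₃ g).val)⁻¹ * τ' g ∈ Subgroup.zpowers (CU p)) := by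
  haveI : NeZero p := ⟨(Fact.out : p.Prime).ne_zero⟩
  constructor
  · rintro ⟨ρ, hρc, hρ⟩
    have hker : Subgroup.center ↥(UT p 4) ≤ (q34 p).ker := by
      intro z hz
      obtain ⟨f, rfl⟩ := (mem_center4 p z).mp hz
      show q34 p _ = 1
      rw [q34_apply, ent4a, ent4b, ent4d]
      exact mk3_one p
    have hker' : Subgroup.center ↥(UT p 4) ≤ (q34' p).ker := by
      intro z hz
      obtain ⟨f, rfl⟩ := (mem_center4 p z).mp hz
      show q34' p _ = 1
      rw [q34'_apply, ent4b, ent4c, ent4e]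
      exact mk3_one p
    refine ⟨(QuotientGroup.lift _ (q34 p) hker).comp ρ,
      (QuotientGroup.lift _ (q34' p) hker').comp ρ, ?_, ?_, ?_⟩
    · rw [MonoidHom.coe_comp]
      exact ctd_comp _ hρc
    · rw [MonoidHom.coe_comp]
      exact ctd_comp _ hρc
    intro g
    obtain ⟨M, hM⟩ := QuotientGroup.mk'_surjective (Subgroup.center ↥(UT p 4)) (ρ g)
    rw [QuotientGroup.mk'_apply] at hM
    obtain ⟨h1, h2, h3⟩ := hρ g M hM
    constructor
    · show (AU p ^ (α₁ g).val * BU p ^ (α₂ g).val)⁻¹ *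
        QuotientGroup.lift _ (q34 p) hker (ρ g) ∈ _
      rw [← hM, QuotientGroup.lift_mk', q34_apply, h1, h2, AU_pow, BU_pow, mk3_mul,
        mk3_inv, mk3_mul]
      simp only [ZMod.natCast_val, ZMod.cast_id]
      apply mk3_mem_zpowers_CU <;> ring
    · show (AU p ^ (α₂ g).val * BU p ^ (α₃ g).val)⁻¹ *
        QuotientGroup.lift _ (q34' p) hker' (ρ g) ∈ _
      rw [← hM, QuotientGroup.lift_mk', q34'_apply, h2, h3, AU_pow, BU_pow, mk3_mul,
        mk3_inv, mk3_mul]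
      simp only [ZMod.natCast_val, ZMod.cast_id]
      apply mk3_mem_zpowers_CU <;> ring
  · rintro ⟨τ, τ', hτc, hτ'c, hcond⟩
    have hτA : ∀ g, ent3 p (τ g) 0 1 = α₁ g ∧ ent3 p (τ g) 1 2 = α₂ g := by
      intro g
      obtain ⟨k, hk⟩ := (mem_zpowers_CU p _).mp (hcond g).1
      have h0 : τ g = (AU p ^ (α₁ g).val * BU p ^ (α₂ g).val) * mk3 p 0 0 k := by
        rw [← hk, mul_inv_cancel_left]
      rw [AU_pow, BU_pow, mk3_mul, mk3_mul] at h0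
      constructor
      · rw [h0, ent3a]; simp [ZMod.natCast_val, ZMod.cast_id]
      · rw [h0, ent3b]; simp [ZMod.natCast_val, ZMod.cast_id]
    have hτ'A : ∀ g, ent3 p (τ' g) 0 1 = α₂ g ∧ ent3 p (τ' g) 1 2 = α₃ g := by
      intro g
      obtain ⟨k, hk⟩ := (mem_zpowers_CU p _).mp (hcond g).2
      have h0 : τ' g = (AU p ^ (α₂ g).val * BU p ^ (α₃ g).val) * mk3 p 0 0 k := by
        rw [← hk, mul_inv_cancel_left]
      rw [AU_pow, BU_pow, mk3_mul, mk3_mul] at h0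
      constructor
      · rw [h0, ent3a]; simp [ZMod.natCast_val, ZMod.cast_id]
      · rw [h0, ent3b]; simp [ZMod.natCast_val, ZMod.cast_id]
    have hτeq : ∀ g, τ g = mk3 p (α₁ g) (α₂ g) (ent3 p (τ g) 0 2) := by
      intro g
      conv_lhs => rw [eta3 p (τ g)]
      rw [(hτA g).1, (hτA g).2]
    have hτ'eq : ∀ g, τ' g = mk3 p (α₂ g) (α₃ g) (ent3 p (τ' g) 0 2) := by
      intro g
      conv_lhs => rw [eta3 p (τ' g)]
      rw [(hτ'A g).1, (hτ'A g).2]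
    have hd : ∀ g h : G, ent3 p (τ (g*h)) 0 2 =
        ent3 p (τ g) 0 2 + ent3 p (τ h) 0 2 + α₁ g * α₂ h := by
      intro g h
      have hm := map_mul τ g h
      rw [hτeq (g*h), hτeq g, hτeq h, mk3_mul] at hm
      exact (mk3_inj p hm).2.2
    have he : ∀ g h : G, ent3 p (τ' (g*h)) 0 2 =
        ent3 p (τ' g) 0 2 + ent3 p (τ' h) 0 2 + α₂ g * α₃ h := by
      intro g h
      have hm := map_mul τ' g h
      rw [hτ'eq (g*h), hτ'eq g, hτ'eq h, mk3_mul] at hm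
      exact (mk3_inj p hm).2.2
    refine ⟨MonoidHom.mk' (fun g => QuotientGroup.mk (mk4 p (α₁ g) (α₂ g) (α₃ g)
        (ent3 p (τ g) 0 2) (ent3 p (τ' g) 0 2) 0)) ?_, ?_, ?_⟩
    · intro g h
      show (QuotientGroup.mk (mk4 p (α₁ (g*h)) (α₂ (g*h)) (α₃ (g*h))
          (ent3 p (τ (g*h)) 0 2) (ent3 p (τ' (g*h)) 0 2) 0) : _) =
        QuotientGroup.mk (mk4 p (α₁ g) (α₂ g) (α₃ g)
          (ent3 p (τ g) 0 2) (ent3 p (τ' g) 0 2) 0) *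
        QuotientGroup.mk (mk4 p (α₁ h) (α₂ h) (α₃ h)
          (ent3 p (τ h) 0 2) (ent3 p (τ' h) 0 2) 0)
      rw [← QuotientGroup.mk_mul, mk4_mul, hα₁ g h, hα₂ g h, hα₃ g h, hd g h, he g h]
      exact mk_mk4_f p _ _ _ _ _ _ _
    · -- continuity
      let u : ↥(UT p 3) → ↥(UT p 3) → (↥(UT p 4) ⧸ Subgroup.center ↥(UT p 4)) :=
        fun X Y => QuotientGroup.mk (mk4 p (ent3 p X 0 1) (ent3 p X 1 2) (ent3 p Y 1 2)
          (ent3 p X 0 2) (ent3 p Y 0 2) 0)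
      have hcont := ctd_comp2 u hτc hτ'c
      have heq : (fun g : G => u (τ g) (τ' g)) =
          fun g : G => (QuotientGroup.mk (mk4 p (α₁ g) (α₂ g) (α₃ g)
            (ent3 p (τ g) 0 2) (ent3 p (τ' g) 0 2) 0) :
              ↥(UT p 4) ⧸ Subgroup.center ↥(UT p 4)) := by
        funext g
        show (QuotientGroup.mk (mk4 p (ent3 p (τ g) 0 1) (ent3 p (τ g) 1 2)
          (ent3 p (τ' g) 1 2) (ent3 p (τ g) 0 2) (ent3 p (τ' g) 0 2) 0) : _) = _
        rw [(hτA g).1, (hτA g).2, (hτ'A g).2]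
      rw [heq] at hcont
      exact hcont
    · intro g M hM
      have hM' : (QuotientGroup.mk (mk4 p (α₁ g) (α₂ g) (α₃ g)
          (ent3 p (τ g) 0 2) (ent3 p (τ' g) 0 2) 0) :
            ↥(UT p 4) ⧸ Subgroup.center ↥(UT p 4)) = QuotientGroup.mk M := hM.symm
      have hc := QuotientGroup.eq.mp hM'
      obtain ⟨f, hf⟩ := (mem_center4 p _).mp hc
      have hMeq : M = mk4 p (α₁ g) (α₂ g) (α₃ g)
          (ent3 p (τ g) 0 2) (ent3 p (τ' g) 0 2) 0 * mk4 p 0 0 0 0 0 f := by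
        rw [← hf, mul_inv_cancel_left]
      rw [mk4_mul] at hMeq
      refine ⟨?_, ?_, ?_⟩
      · rw [hMeq, ent4a, add_zero]
      · rw [hMeq, ent4b, add_zero]
      · rw [hMeq, ent4c, add_zero]
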